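/- Let n ≥ 2 and let d, l be positive integers, and define 𝓟ⁿ_{d,l} = { V ∈ C(ℝⁿ, ℝ) : there exist polynomial functions V₁,…,V_l on ℝⁿ of degree at most d such that V(x) ∈ {V₁(x),…,V_l(x)} for every x ∈ ℝⁿ }. If 𝓟ⁿ_{d,l} is a universal class of Lyapunov functions (for n-dimensional switched systems), then 𝓟²_{d,l} is a universal class of Lyapunov functions (for 2-dimensional switched systems). -/

import Mathlib

open MeasureTheory Set
open scoped RealInnerProductSpace

noncomputable section

attribute [local instance] Matrix.normedAddCommGroup Matrix.normedSpace

local instance matrixMeasurableSpace {n : ℕ} :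
    MeasurableSpace (Matrix (Fin n) (Fin n) ℝ) :=
  inferInstanceAs (MeasurableSpace (Fin n → Fin n → ℝ))

/-- The space of `n × n` real matrices. -/
abbrev Mat (n : ℕ) := Matrix (Fin n) (Fin n) ℝ

/-- The state space `ℝⁿ` with its Euclidean structure. -/
abbrev Vec (n : ℕ) := EuclideanSpace ℝ (Fin n)

/-- Action of a matrix on a vector of Euclidean space. -/
def Mat.act {n : ℕ} (M : Mat n) (x : Vec n) : Vec n := Matrix.toEuclideanLin M x

/-- A switching law for the switched system `(Σ_𝓜)`: a measurable function taking values in `𝓜`. -/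
def IsSwitchingLaw {n : ℕ} (𝓜 : Set (Mat n)) (A : ℝ → Mat n) : Prop :=
  Measurable A ∧ ∀ t, 0 ≤ t → A t ∈ 𝓜

/-- `Φ` is the fundamental matrix `t ↦ Φ_A(t,0)` of the switching law `A`: the continuous
solution on `[0,∞)` of `Φ(t) = Id + ∫₀ᵗ A(s) Φ(s) ds`. -/
def IsFundamentalMatrix {n : ℕ} (A : ℝ → Mat n) (Φ : ℝ → Mat n) : Prop :=
  ContinuousOn Φ (Ici (0:ℝ)) ∧
  ∀ t, 0 ≤ t → Φ t = 1 + ∫ s in (0:ℝ)..t, A s * Φ s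

/-- Uniform stability of the switched system `(Σ_𝓜)`. -/
def UniformlyStable {n : ℕ} (𝓜 : Set (Mat n)) : Prop :=
  ∃ C > 0, ∀ A Φ : ℝ → Mat n, IsSwitchingLaw 𝓜 A → IsFundamentalMatrix A Φ →
    ∀ t, 0 ≤ t → ‖Φ t‖ ≤ C

/-- Uniform exponential stability of the switched system `(Σ_𝓜)`. -/
def UniformlyExpStable {n : ℕ} (𝓜 : Set (Mat n)) : Prop :=
  ∃ C > 0, ∃ γ > 0, ∀ A Φ : ℝ → Mat n, IsSwitchingLaw 𝓜 A → IsFundamentalMatrix A Φ →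
    ∀ t, 0 ≤ t → ‖Φ t‖ ≤ C * Real.exp (-γ * t)

/-- A nonstrict common Lyapunov function for `(Σ_𝓜)`: continuous, nonnegative, positive
definite, and non-increasing along every trajectory. -/
def IsNonstrictCLF {n : ℕ} (𝓜 : Set (Mat n)) (V : Vec n → ℝ) : Prop :=
  Continuous V ∧ (∀ x, 0 ≤ V x) ∧ V 0 = 0 ∧ (∀ x, x ≠ 0 → 0 < V x) ∧
  ∀ A Φ : ℝ → Mat n, IsSwitchingLaw 𝓜 A → IsFundamentalMatrix A Φ → ∀ x₀ : Vec n,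
    AntitoneOn (fun t => V ((Φ t).act x₀)) (Ici 0)

/-- A (strict) common Lyapunov function for `(Σ_𝓜)`: a nonstrict one that is moreover
strictly decreasing along every nonzero trajectory. -/
def IsCLF {n : ℕ} (𝓜 : Set (Mat n)) (V : Vec n → ℝ) : Prop :=
  IsNonstrictCLF 𝓜 V ∧
  ∀ A Φ : ℝ → Mat n, IsSwitchingLaw 𝓜 A → IsFundamentalMatrix A Φ → ∀ x₀ : Vec n, x₀ ≠ 0 →
    StrictAntiOn (fun t => V ((Φ t).act x₀)) (Ici 0)

/-- A universal class of Lyapunov functions. -/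
def IsUniversalClass {n : ℕ} (P : Set (Vec n → ℝ)) : Prop :=
  ∀ 𝓜 : Set (Mat n), Bornology.IsBounded 𝓜 → UniformlyExpStable 𝓜 →
    ∃ V ∈ P, IsCLF 𝓜 V

/-- `V` is absolutely homogeneous of degree `α`. -/
def AbsHomog {n : ℕ} (α : ℝ) (V : Vec n → ℝ) : Prop :=
  ∀ (lam : ℝ) (x : Vec n), V (lam • x) = |lam| ^ α * V x

/-- The subdifferential of a convex function. -/
def subdiff {n : ℕ} (V : Vec n → ℝ) (x : Vec n) : Set (Vec n) :=
  {l | ∀ y, ⟪l, y - x⟫ ≤ V y - V x}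

/-- The family of polynomial functions on `ℝⁿ` of degree at most `d`. -/
def PolyDeg (n d : ℕ) : Set (Vec n → ℝ) :=
  {V | ∃ p : MvPolynomial (Fin n) ℝ,
    p.totalDegree ≤ d ∧ ∀ x : Vec n, V x = MvPolynomial.eval (fun i => x i) p}

/-- The family `𝓟ⁿ_{d,l}` of continuous functions `V` on `ℝⁿ` such that, for some
polynomials `V₁, …, V_l` of degree at most `d`, `V(x) ∈ {V₁(x), …, V_l(x)}` for all `x`. -/
def PolyPiece (n d l : ℕ) : Set (Vec n → ℝ) :=
  {V | Continuous V ∧ ∃ W : Fin l → Vec n → ℝ,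
    (∀ i, W i ∈ PolyDeg n d) ∧ ∀ x : Vec n, ∃ i, V x = W i x}

variable {n : ℕ}

lemma sum_helper (hn : 2 ≤ n) {M : Type*} [AddCommMonoid M] (f : Fin n → M)
    (hf : ∀ i : Fin n, 2 ≤ (i : ℕ) → f i = 0) :
    ∑ i, f i = ∑ j : Fin 2, f (Fin.castLE hn j) := by
  have : ∑ j : Fin 2, f (Fin.castLE hn j) = ∑ j ∈ Finset.univ.map (Fin.castLEEmb hn), f j := by
    rw [Finset.sum_map]; rfl
  rw [this]
  apply (Finset.sum_subset (Finset.subset_univ _) _).symm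
  intro x _ hx
  apply hf
  by_contra h
  push_neg at h
  refine hx ?_
  simp only [Finset.mem_map, Finset.mem_univ, true_and]
  exact ⟨⟨(x : ℕ), h⟩, by ext; simp⟩

def embMat (hn : 2 ≤ n) (M : Mat 2) (c : ℝ) : Mat n := fun i j =>
  if hi : (i : ℕ) < 2 then (if hj : (j : ℕ) < 2 then M ⟨i, hi⟩ ⟨j, hj⟩ else 0)
  else (if i = j then c else 0)

def projMat (hn : 2 ≤ n) (P : Mat n) : Mat 2 := fun i j => P (Fin.castLE hn i) (Fin.castLE hn j)

lemma embMat_one (hn : 2 ≤ n) : embMat hn 1 1 = 1 := by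
  ext i j
  simp only [embMat, Matrix.one_apply]
  by_cases hi : (i : ℕ) < 2
  · by_cases hj : (j : ℕ) < 2
    · simp only [hi, hj, dif_pos, Matrix.one_apply, Fin.mk.injEq]
      congr 1
      simp [Fin.ext_iff]
    · simp only [hi, hj, dif_pos, dif_neg, not_false_iff]
      rw [if_neg (fun h : i = j => hj (by rw [← h]; exact hi))]
  · simp only [hi, dif_neg, not_false_iff]

lemma projMat_embMat (hn : 2 ≤ n) (M : Mat 2) (c : ℝ) : projMat hn (embMat hn M c) = M := by
  ext i j
  simp [projMat, embMat, Fin.is_lt, Fin.is_le]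

lemma embMat_mul (hn : 2 ≤ n) (M N : Mat 2) (c e : ℝ) :
    embMat hn M c * embMat hn N e = embMat hn (M * N) (c * e) := by
  ext i j
  rw [Matrix.mul_apply]
  by_cases hi : (i : ℕ) < 2
  · by_cases hj : (j : ℕ) < 2
    · rw [sum_helper hn _ (fun k hk => ?_)]
      · simp only [embMat, hi, hj, dif_pos, Matrix.mul_apply]
        apply Finset.sum_congr rfl
        intro k _
        congr 1 <;> simp [embMat, Fin.is_lt, Fin.is_le, hi, hj]
      · have hk2 : ¬ ((k : ℕ) < 2) := by omega
        simp [embMat, hi, hk2]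
    · simp only [embMat, hi, hj, dif_pos, dif_neg, not_false_iff]
      apply Finset.sum_eq_zero
      intro k _
      by_cases hk : (k : ℕ) < 2
      · simp [embMat, hk, hj]
      · have : i ≠ k := fun h => hk (h ▸ hi)
        simp [embMat, hi, hk, this]
  · by_cases hj : (j : ℕ) < 2
    · have hij : i ≠ j := fun h => hi (h ▸ hj)
      simp only [embMat, hi, dif_neg, not_false_iff, if_neg hij]
      apply Finset.sum_eq_zero
      intro k _
      by_cases hk : (k : ℕ) < 2
      · have : i ≠ k := fun h => hi (h ▸ hk)
        simp [embMat, hi, hk, this]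
      · have : k ≠ j := fun h => hk (h ▸ hj)
        simp [embMat, hk, hj, this]
    · rw [Finset.sum_eq_single i]
      · simp only [embMat, hi, hj, dif_neg, not_false_iff, if_pos rfl]
        rw [if_pos trivial, mul_ite, mul_zero]
      · intro k _ hk
        by_cases hk2 : (k : ℕ) < 2
        · have : i ≠ k := fun h => hi (h ▸ hk2)
          simp [embMat, hi, this]
        · have : i ≠ k := fun h => hk h.symm
          simp [embMat, hi, hk2, this]
      · simp

/-- embMat as a continuous linear map in (M, c). -/
noncomputable def embL (hn : 2 ≤ n) : (Mat 2 × ℝ) →L[ℝ] Mat n :=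
  LinearMap.toContinuousLinearMap
  { toFun := fun p => embMat hn p.1 p.2
    map_add' := by
      intro p q
      ext i j
      by_cases hi : (i : ℕ) < 2
      · by_cases hj : (j : ℕ) < 2 <;> simp [embMat, hi, hj, Matrix.add_apply]
      · by_cases hij : i = j
        · subst hij; simp [embMat, hi]
        · simp [embMat, hi, hij]
    map_smul' := by
      intro r p
      ext i j
      by_cases hi : (i : ℕ) < 2
      · by_cases hj : (j : ℕ) < 2 <;> simp [embMat, hi, hj, Matrix.smul_apply]
      · by_cases hij : i = j
        · subst hij; simp [embMat, hi]
        · simp [embMat, hi, hij] }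

lemma embL_apply (hn : 2 ≤ n) (M : Mat 2) (c : ℝ) : embL hn (M, c) = embMat hn M c := rfl

noncomputable def projL (hn : 2 ≤ n) : Mat n →L[ℝ] Mat 2 :=
  LinearMap.toContinuousLinearMap
  { toFun := projMat hn
    map_add' := by intro p q; ext i j; simp [projMat, Matrix.add_apply]
    map_smul' := by intro r p; ext i j; simp [projMat, Matrix.smul_apply] }

lemma projL_apply (hn : 2 ≤ n) (P : Mat n) : projL hn P = projMat hn P := rfl

lemma norm_embMat_le (hn : 2 ≤ n) (M : Mat 2) (c : ℝ) :
    ‖embMat hn M c‖ ≤ max ‖M‖ |c| := by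
  rw [Matrix.norm_le_iff (le_max_iff.2 (Or.inl (norm_nonneg M)))]
  intro i j
  by_cases hi : (i : ℕ) < 2
  · by_cases hj : (j : ℕ) < 2
    · simp only [embMat, hi, hj, dif_pos]
      exact le_trans (M.norm_entry_le_entrywise_sup_norm) (le_max_left _ _)
    · simp only [embMat, hi, hj, dif_pos, dif_neg, not_false_iff, norm_zero]
      positivity
  · simp only [embMat, hi, dif_neg, not_false_iff]
    by_cases hij : i = j
    · simp only [hij, if_pos rfl, Real.norm_eq_abs]
      exact le_max_right _ _
    · simp only [if_neg hij, norm_zero]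
      positivity

lemma norm_projMat_le (hn : 2 ≤ n) (P : Mat n) : ‖projMat hn P‖ ≤ ‖P‖ := by
  rw [Matrix.norm_le_iff (norm_nonneg P)]
  intro i j
  exact P.norm_entry_le_entrywise_sup_norm

lemma projMat_embMat_mul (hn : 2 ≤ n) (M : Mat 2) (c : ℝ) (P : Mat n) :
    projMat hn (embMat hn M c * P) = M * projMat hn P := by
  ext i j
  rw [projMat, Matrix.mul_apply, Matrix.mul_apply]
  rw [sum_helper hn _ (fun k hk => ?_)]
  · apply Finset.sum_congr rfl
    intro k _
    congr 1
    simp [embMat, Fin.is_lt, Fin.is_le, projMat]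
  · have hk2 : ¬ ((k : ℕ) < 2) := by omega
    simp [embMat, Fin.is_lt, Fin.is_le, hk2]

lemma projMat_one (hn : 2 ≤ n) : projMat hn (1 : Mat n) = 1 := by
  ext i j
  simp only [projMat, Matrix.one_apply]
  congr 1
  simp [Fin.ext_iff]

/-- vector embedding -/
noncomputable def embV (hn : 2 ≤ n) : Vec 2 →L[ℝ] Vec n :=
  LinearMap.toContinuousLinearMap
  { toFun := fun x => WithLp.toLp 2 (fun i : Fin n => if h : (i : ℕ) < 2 then x ⟨i, h⟩ else 0)
    map_add' := by
      intro x y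
      ext i
      by_cases hi : (i : ℕ) ≤ 1 <;> simp [hi, PiLp.add_apply]
    map_smul' := by
      intro r x
      ext i
      by_cases hi : (i : ℕ) ≤ 1 <;> simp [hi, PiLp.smul_apply] }

lemma embV_apply (hn : 2 ≤ n) (x : Vec 2) (i : Fin n) :
    embV hn x i = if h : (i : ℕ) < 2 then x ⟨i, h⟩ else 0 := rfl

lemma embV_ne_zero (hn : 2 ≤ n) {x : Vec 2} (hx : x ≠ 0) : embV hn x ≠ 0 := by
  intro h
  apply hx
  ext j
  have := congrFun (congrArg (fun v : Vec n => (v : Fin n → ℝ)) h) (Fin.castLE hn j)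
  simpa [embV_apply, Fin.is_lt, Fin.is_le] using this

lemma act_embMat (hn : 2 ≤ n) (M : Mat 2) (c : ℝ) (x : Vec 2) :
    (embMat hn M c).act (embV hn x) = embV hn (M.act x) := by
  have hact : ∀ (m : ℕ) (P : Mat m) (v : Vec m) (i : Fin m), P.act v i = ∑ j, P i j * v j :=
    fun _ _ _ _ => rfl
  ext i
  rw [hact]
  by_cases hi : (i : ℕ) < 2
  · rw [sum_helper hn _ (fun k hk => ?_)]
    · rw [embV_apply, dif_pos hi, hact]
      apply Finset.sum_congr rfl
      intro k _
      rw [embV_apply]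
      congr 1 <;> simp [embMat, Fin.is_lt, Fin.is_le, hi]
    · have hk2 : ¬ ((k : ℕ) < 2) := by omega
      simp [embV_apply, hk2]
  · rw [embV_apply, dif_neg hi]
    apply Finset.sum_eq_zero
    intro k _
    by_cases hk : (k : ℕ) < 2
    · have : i ≠ k := fun h => hi (by rw [h]; exact hk)
      simp [embMat, hi, hk, this]
    · simp [embV_apply, hk]

local instance {m : ℕ} : BorelSpace (Mat m) := inferInstanceAs (BorelSpace (Fin m → Fin m → ℝ))

local instance matTop {m : ℕ} : TopologicalSpace (Mat m) :=
  PseudoMetricSpace.toUniformSpace.toTopologicalSpace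

local instance {m : ℕ} : BorelSpace (Mat m) := inferInstanceAs (BorelSpace (Fin m → Fin m → ℝ))

lemma norm_mul_le_card {m : ℕ} (X Y : Mat m) : ‖X * Y‖ ≤ (m : ℝ) * ‖X‖ * ‖Y‖ := by
  have h0 : (0:ℝ) ≤ (m : ℝ) * ‖X‖ * ‖Y‖ := by positivity
  rw [Matrix.norm_le_iff h0]
  intro i j
  rw [Matrix.mul_apply]
  calc ‖∑ k, X i k * Y k j‖ ≤ ∑ k, ‖X i k * Y k j‖ := norm_sum_le _ _
    _ ≤ ∑ _k : Fin m, ‖X‖ * ‖Y‖ := by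
        apply Finset.sum_le_sum
        intro k _
        rw [norm_mul]
        exact mul_le_mul (X.norm_entry_le_entrywise_sup_norm) (Y.norm_entry_le_entrywise_sup_norm)
          (norm_nonneg _) (norm_nonneg _)
    _ = (m : ℝ) * ‖X‖ * ‖Y‖ := by simp [Finset.sum_const, mul_assoc]

lemma mulIntegrable {m : ℕ} {A Φ : ℝ → Mat m} (hA : Measurable A) {R : ℝ}
    (hR : ∀ s, 0 ≤ s → ‖A s‖ ≤ R) (hΦ : ContinuousOn Φ (Ici 0)) {t : ℝ} (ht : 0 ≤ t) :
    IntervalIntegrable (fun s => A s * Φ s) volume 0 t := by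
  rw [intervalIntegrable_iff_integrableOn_Ioc_of_le ht]
  obtain ⟨B, hB⟩ : ∃ B, ∀ s ∈ Icc (0:ℝ) t, ‖Φ s‖ ≤ B := by
    obtain ⟨B, hB⟩ := (isCompact_Icc (a := (0:ℝ)) (b := t)).exists_bound_of_continuousOn
      (hΦ.mono (fun s hs => hs.1))
    exact ⟨B, hB⟩
  have hmeasA : AEMeasurable A (volume.restrict (Ioc (0:ℝ) t)) := hA.aemeasurable
  have hmeasΦ : AEMeasurable Φ (volume.restrict (Ioc (0:ℝ) t)) :=
    (hΦ.mono (fun s hs => le_of_lt hs.1)).aemeasurable measurableSet_Ioc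
  have hmeas : AEStronglyMeasurable (fun s => A s * Φ s) (volume.restrict (Ioc (0:ℝ) t)) := by
    have : AEMeasurable (fun s => A s * Φ s) (volume.restrict (Ioc (0:ℝ) t)) :=
      (continuous_fst.matrix_mul continuous_snd :
        Continuous fun p : Mat m × Mat m => p.1 * p.2).measurable.comp_aemeasurable
        (hmeasA.prodMk hmeasΦ)
    exact this.aestronglyMeasurable
  apply Integrable.mono' (integrableOn_const (C := (m : ℝ) * R * B) measure_Ioc_lt_top.ne) hmeas
  filter_upwards [ae_restrict_mem measurableSet_Ioc] with s hs
  calc ‖A s * Φ s‖ ≤ (m : ℝ) * ‖A s‖ * ‖Φ s‖ := norm_mul_le_card _ _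
    _ ≤ (m : ℝ) * R * B := by
        have h1 := hR s (le_of_lt hs.1)
        have h2 := hB s ⟨le_of_lt hs.1, hs.2⟩
        have h4 : (0:ℝ) ≤ R := le_trans (norm_nonneg _) (hR 0 le_rfl)
        gcongr

/-- Grönwall-type iteration lemma. -/
lemma gronwall_aux {g : ℝ → ℝ} (hg : ContinuousOn g (Ici 0)) (hg0 : ∀ s, 0 ≤ g s)
    {K : ℝ} (hK : 0 ≤ K) (h : ∀ t, 0 ≤ t → g t ≤ K * ∫ s in (0:ℝ)..t, g s) :
    ∀ t, 0 ≤ t → g t = 0 := by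
  intro t ht
  obtain ⟨B, hB⟩ : ∃ B, ∀ s ∈ Icc (0:ℝ) t, g s ≤ B := by
    obtain ⟨B, hB⟩ := (isCompact_Icc (a := (0:ℝ)) (b := t)).exists_bound_of_continuousOn
      (hg.mono (fun s hs => hs.1))
    exact ⟨B, fun s hs => le_trans (le_abs_self _) (by simpa [Real.norm_eq_abs] using hB s hs)⟩
  have hgint : ∀ s ∈ Icc (0:ℝ) t, IntervalIntegrable g volume 0 s := by
    intro s hs
    apply ContinuousOn.intervalIntegrable
    apply hg.mono
    rw [uIcc_of_le hs.1]
    exact fun u hu => hu.1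
  have key : ∀ k : ℕ, ∀ s ∈ Icc (0:ℝ) t, g s ≤ B * (K * s) ^ k / (Nat.factorial k) := by
    intro k
    induction k with
    | zero => intro s hs; simpa using hB s hs
    | succ k ih =>
      intro s hs
      have hs0 : (0:ℝ) ≤ s := hs.1
      calc g s ≤ K * ∫ u in (0:ℝ)..s, g u := h s hs0
        _ ≤ K * ∫ u in (0:ℝ)..s, B * (K * u) ^ k / (Nat.factorial k) := by
            apply mul_le_mul_of_nonneg_left _ hK
            apply intervalIntegral.integral_mono_on hs0 (hgint s hs)
            · apply Continuous.intervalIntegrable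
              continuity
            · intro u hu
              exact ih u ⟨hu.1, le_trans hu.2 hs.2⟩
        _ = B * (K * s) ^ (k+1) / (Nat.factorial (k+1)) := by
            have : ∀ u : ℝ, B * (K * u) ^ k / (Nat.factorial k)
                = (B * K ^ k / (Nat.factorial k)) * u ^ k := by
              intro u; rw [mul_pow]; ring
            simp_rw [this]
            rw [intervalIntegral.integral_const_mul, integral_pow]
            rw [Nat.factorial_succ]
            push_cast
            field_simp
            ring
  have hlim : Filter.Tendsto (fun k : ℕ => B * (K * t) ^ k / (Nat.factorial k))
      Filter.atTop (nhds 0) := by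
    have := FloorSemiring.tendsto_pow_div_factorial_atTop (K := ℝ) (K * t)
    have h2 := this.const_mul B
    simpa [mul_div_assoc] using h2
  have : g t ≤ 0 := ge_of_tendsto' hlim (fun k => key k t ⟨ht, le_rfl⟩)
  exact le_antisymm this (hg0 t)

/-- Uniqueness of the fundamental matrix. -/
lemma fund_unique {m : ℕ} {A : ℝ → Mat m} (hA : Measurable A) {R : ℝ}
    (hR : ∀ s, 0 ≤ s → ‖A s‖ ≤ R)
    {Φ₁ Φ₂ : ℝ → Mat m}
    (hC1 : ContinuousOn Φ₁ (Ici 0))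
    (hE1 : ∀ t, 0 ≤ t → Φ₁ t = 1 + ∫ s in (0:ℝ)..t, A s * Φ₁ s)
    (hC2 : ContinuousOn Φ₂ (Ici 0))
    (hE2 : ∀ t, 0 ≤ t → Φ₂ t = 1 + ∫ s in (0:ℝ)..t, A s * Φ₂ s) :
    ∀ t, 0 ≤ t → Φ₁ t = Φ₂ t := by
  have hR0 : (0:ℝ) ≤ R := le_trans (norm_nonneg _) (hR 0 le_rfl)
  set D : ℝ → Mat m := fun s => Φ₁ s - Φ₂ s with hD
  have hCD : ContinuousOn D (Ici 0) := hC1.sub hC2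
  have hED : ∀ t, 0 ≤ t → D t = ∫ s in (0:ℝ)..t, A s * D s := by
    intro t ht
    have h1 := hE1 t ht
    have h2 := hE2 t ht
    have : D t = (1 + ∫ s in (0:ℝ)..t, A s * Φ₁ s) - (1 + ∫ s in (0:ℝ)..t, A s * Φ₂ s) := by
      rw [hD]; rw [← h1, ← h2]
    rw [this]
    rw [add_sub_add_left_eq_sub]
    rw [← intervalIntegral.integral_sub (mulIntegrable hA hR hC1 ht) (mulIntegrable hA hR hC2 ht)]
    apply intervalIntegral.integral_congr
    intro s _
    simp [hD, mul_sub]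
  have hnorm : ∀ t, 0 ≤ t → ‖D t‖ ≤ ((m : ℝ) * R) * ∫ s in (0:ℝ)..t, ‖D s‖ := by
    intro t ht
    rw [hED t ht]
    calc ‖∫ s in (0:ℝ)..t, A s * D s‖ ≤ ∫ s in (0:ℝ)..t, ‖A s * D s‖ :=
          intervalIntegral.norm_integral_le_integral_norm ht
      _ ≤ ∫ s in (0:ℝ)..t, ((m : ℝ) * R) * ‖D s‖ := by
          apply intervalIntegral.integral_mono_on ht
          · exact (mulIntegrable hA hR hCD ht).norm
          · apply IntervalIntegrable.const_mul
            apply ContinuousOn.intervalIntegrable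
            apply ContinuousOn.norm
            apply hCD.mono
            rw [uIcc_of_le ht]
            exact fun u hu => hu.1
          · intro s hs
            calc ‖A s * D s‖ ≤ (m : ℝ) * ‖A s‖ * ‖D s‖ := norm_mul_le_card _ _
              _ ≤ (m : ℝ) * R * ‖D s‖ := by
                  have := hR s hs.1
                  gcongr
      _ = ((m : ℝ) * R) * ∫ s in (0:ℝ)..t, ‖D s‖ := intervalIntegral.integral_const_mul _ _
  have hz := gronwall_aux (hCD.norm) (fun s => norm_nonneg _)
    (by positivity : (0:ℝ) ≤ (m : ℝ) * R) hnorm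
  intro t ht
  exact sub_eq_zero.1 (norm_eq_zero.1 (hz t ht))



lemma embMat_add (hn : 2 ≤ n) (M N : Mat 2) (c e : ℝ) :
    embMat hn (M + N) (c + e) = embMat hn M c + embMat hn N e := by
  have := map_add (embL hn) (M, c) (N, e)
  simpa [embL_apply, Prod.mk_add_mk] using this

lemma integral_embMat (hn : 2 ≤ n) {f : ℝ → Mat 2} {g : ℝ → ℝ} {t : ℝ}
    (hf : IntervalIntegrable f volume 0 t) (hg : IntervalIntegrable g volume 0 t) :
    ∫ s in (0:ℝ)..t, embMat hn (f s) (g s)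
      = embMat hn (∫ s in (0:ℝ)..t, f s) (∫ s in (0:ℝ)..t, g s) := by
  have hpair : IntervalIntegrable (fun s => (f s, g s)) volume 0 t :=
    ⟨hf.1.prodMk hg.1, hf.2.prodMk hg.2⟩
  have h2 : (∫ s in (0:ℝ)..t, (f s, g s)) = (∫ s in (0:ℝ)..t, f s, ∫ s in (0:ℝ)..t, g s) := by
    apply Prod.ext
    · exact ((ContinuousLinearMap.fst ℝ (Mat 2) ℝ).intervalIntegral_comp_comm hpair).symm
    · exact ((ContinuousLinearMap.snd ℝ (Mat 2) ℝ).intervalIntegral_comp_comm hpair).symm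
  exact ((embL hn).intervalIntegral_comp_comm hpair).trans (by rw [h2]; rfl)

lemma exp_neg_integral_eq (t : ℝ) :
    Real.exp (-t) = 1 + ∫ s in (0:ℝ)..t, -Real.exp (-s) := by
  have h1 : (∫ s in (0:ℝ)..t, -Real.exp (-s)) = -∫ s in (0:ℝ)..t, Real.exp (-s) :=
    intervalIntegral.integral_neg
  have h2 : (∫ s in (0:ℝ)..t, Real.exp (-s)) = ∫ s in (-t)..(-(0:ℝ)), Real.exp s :=
    intervalIntegral.integral_comp_neg Real.exp
  rw [h1, h2, integral_exp]
  simp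

lemma fund_emb (hn : 2 ≤ n) {A Φ : ℝ → Mat 2} (hA : Measurable A) {R : ℝ}
    (hR : ∀ s, 0 ≤ s → ‖A s‖ ≤ R) (hΦ : IsFundamentalMatrix A Φ) :
    IsFundamentalMatrix (fun s => embMat hn (A s) (-1))
      (fun t => embMat hn (Φ t) (Real.exp (-t))) := by
  constructor
  · exact (embL hn).continuous.comp_continuousOn
      (hΦ.1.prodMk ((Real.continuous_exp.comp continuous_neg).continuousOn))
  · intro t ht
    have h1 : ∀ s : ℝ, embMat hn (A s) (-1) * embMat hn (Φ s) (Real.exp (-s))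
        = embMat hn (A s * Φ s) (-Real.exp (-s)) := by
      intro s
      rw [embMat_mul, neg_one_mul]
    simp only [h1]
    have hg : IntervalIntegrable (fun s => -Real.exp (-s)) volume 0 t :=
      (by continuity : Continuous fun s : ℝ => -Real.exp (-s)).intervalIntegrable 0 t
    rw [integral_embMat hn (mulIntegrable hA hR hΦ.1 ht) hg]
    have h2 : (∫ s in (0:ℝ)..t, A s * Φ s) = Φ t - 1 := by
      have := hΦ.2 t ht
      rw [this]; abel
    have h4 : (∫ s in (0:ℝ)..t, -Real.exp (-s)) = Real.exp (-t) - 1 := by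
      have := exp_neg_integral_eq t
      linarith
    rw [h2, h4]
    have h5 : Φ t = 1 + (Φ t - 1) := by abel
    have h6 : Real.exp (-t) = 1 + (Real.exp (-t) - 1) := by ring
    conv_lhs => rw [h5, h6]
    rw [embMat_add hn, embMat_one hn]

lemma fund_proj (hn : 2 ≤ n) {A' Φ' : ℝ → Mat n}
    (hblock : ∀ s, 0 ≤ s → A' s = embMat hn (projMat hn (A' s)) (-1))
    (hA' : Measurable A') {R' : ℝ} (hR' : ∀ s, 0 ≤ s → ‖A' s‖ ≤ R')
    (hΦ' : IsFundamentalMatrix A' Φ') :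
    IsFundamentalMatrix (fun s => projMat hn (A' s)) (fun t => projMat hn (Φ' t)) := by
  constructor
  · exact (projL hn).continuous.comp_continuousOn hΦ'.1
  · intro t ht
    show projMat hn (Φ' t) = 1 + ∫ s in (0:ℝ)..t, projMat hn (A' s) * projMat hn (Φ' s)
    have h0 := hΦ'.2 t ht
    have h1 : projMat hn (Φ' t) = projMat hn (1 : Mat n)
        + projMat hn (∫ s in (0:ℝ)..t, A' s * Φ' s) := by
      rw [h0]
      exact map_add (projL hn) _ _
    rw [h1, projMat_one]
    congr 1
    rw [← projL_apply]
    refine ((projL hn).intervalIntegral_comp_comm (mulIntegrable hA' hR' hΦ'.1 ht)).symm.trans ?_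
    apply intervalIntegral.integral_congr
    intro s hs
    rw [uIcc_of_le ht] at hs
    have hs0 : (0:ℝ) ≤ s := hs.1
    show projL hn (A' s * Φ' s) = projMat hn (A' s) * projMat hn (Φ' s)
    rw [projL_apply]
    conv_lhs => rw [hblock s hs0]
    rw [projMat_embMat_mul]



open MvPolynomial in
lemma eval_eq_aeval (f : Fin 2 → ℝ) (p : MvPolynomial (Fin 2) ℝ) :
    MvPolynomial.eval f p = MvPolynomial.aeval f p := by
  rw [aeval_eq_eval₂Hom, Algebra.algebraMap_self]
  rfl

open MvPolynomial in
lemma eval_eq_aeval' (f : Fin n → ℝ) (p : MvPolynomial (Fin n) ℝ) :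
    MvPolynomial.eval f p = MvPolynomial.aeval f p := by
  rw [aeval_eq_eval₂Hom, Algebra.algebraMap_self]
  rfl

/-- variable substitution sending coordinates `≥ 2` to zero -/
noncomputable def killVars (hn : 2 ≤ n) : Fin n → MvPolynomial (Fin 2) ℝ := fun j =>
  if h : (j : ℕ) < 2 then MvPolynomial.X ⟨j, h⟩ else 0

open MvPolynomial in
lemma totalDegree_bind₁_killVars (hn : 2 ≤ n) (p : MvPolynomial (Fin n) ℝ) :
    (bind₁ (killVars hn) p).totalDegree ≤ p.totalDegree := by
  have hg : ∀ j, (killVars hn j).totalDegree ≤ 1 := by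
    intro j
    by_cases h : (j : ℕ) < 2 <;> simp [killVars, h, totalDegree_X]
  calc (bind₁ (killVars hn) p).totalDegree
      = (∑ s ∈ p.support, bind₁ (killVars hn) (monomial s (coeff s p))).totalDegree := by
        rw [← map_sum, ← p.as_sum]
    _ ≤ p.support.sup (fun s => (bind₁ (killVars hn) (monomial s (coeff s p))).totalDegree) :=
        totalDegree_finset_sum _ _
    _ ≤ p.totalDegree := by
        apply Finset.sup_le
        intro s hs
        rw [bind₁_monomial]
        calc (C (coeff s p) * ∏ i ∈ s.support, killVars hn i ^ s i).totalDegree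
            ≤ (C (coeff s p) : MvPolynomial (Fin 2) ℝ).totalDegree
              + (∏ i ∈ s.support, killVars hn i ^ s i).totalDegree := totalDegree_mul _ _
          _ ≤ 0 + ∑ i ∈ s.support, (killVars hn i ^ s i).totalDegree := by
              rw [totalDegree_C]
              exact Nat.add_le_add_left (totalDegree_finset_prod _ _) 0
          _ ≤ ∑ i ∈ s.support, s i := by
              rw [zero_add]
              apply Finset.sum_le_sum
              intro i _
              calc (killVars hn i ^ s i).totalDegree ≤ s i * (killVars hn i).totalDegree :=
                    totalDegree_pow _ _
                _ ≤ s i * 1 := Nat.mul_le_mul_left _ (hg i)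
                _ = s i := Nat.mul_one _
          _ ≤ p.totalDegree := le_totalDegree hs

open MvPolynomial in
lemma eval_bind₁_killVars (hn : 2 ≤ n) (p : MvPolynomial (Fin n) ℝ) (x : Vec 2) :
    MvPolynomial.eval (fun i : Fin 2 => x i) (bind₁ (killVars hn) p)
      = MvPolynomial.eval (fun j : Fin n => embV hn x j) p := by
  have hfun : (fun i : Fin n => MvPolynomial.aeval (fun i : Fin 2 => x i) (killVars hn i))
      = fun j => embV hn x j := by
    funext j
    by_cases h : (j : ℕ) < 2 <;> simp [killVars, h, embV_apply]
  rw [eval_eq_aeval, aeval_bind₁, hfun, eval_eq_aeval']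



lemma fund_congr {m : ℕ} {A₁ A₂ : ℝ → Mat m} (h : ∀ s, 0 ≤ s → A₁ s = A₂ s) {Φ : ℝ → Mat m}
    (hΦ : IsFundamentalMatrix A₁ Φ) : IsFundamentalMatrix A₂ Φ := by
  refine ⟨hΦ.1, fun t ht => ?_⟩
  rw [hΦ.2 t ht]
  congr 1
  apply intervalIntegral.integral_congr
  intro s hs
  rw [uIcc_of_le ht] at hs
  show A₁ s * Φ s = A₂ s * Φ s
  rw [h s hs.1]


/-- If the class `𝓟ⁿ_{d,l}` is universal for `n`-dimensional switched
systems (`n ≥ 2`), then `𝓟²_{d,l}` is universal for `2`-dimensional switched systems. -/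
theorem polyPiece_universal_dim_two_of_universal {n : ℕ} (hn : 2 ≤ n) (d l : ℕ)
    (hd : 1 ≤ d) (hl : 1 ≤ l)
    (huniv : IsUniversalClass (PolyPiece n d l)) :
    IsUniversalClass (PolyPiece 2 d l) := by
  intro 𝓜 h𝓜b h𝓜s
  obtain ⟨R0, hR0⟩ := isBounded_iff_forall_norm_le.1 h𝓜b
  set R : ℝ := max R0 0 with hRdef
  have hRm : ∀ M ∈ 𝓜, ‖M‖ ≤ R := fun M hM => le_trans (hR0 M hM) (le_max_left _ _)
  set 𝓜' : Set (Mat n) := (fun M => embMat hn M (-1)) '' 𝓜 with h𝓜'def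
  have h𝓜'b : Bornology.IsBounded 𝓜' := by
    rw [isBounded_iff_forall_norm_le]
    refine ⟨max R 1, ?_⟩
    rintro _ ⟨M, hM, rfl⟩
    refine le_trans (norm_embMat_le hn M (-1)) ?_
    apply max_le_max (hRm M hM)
    simp
  obtain ⟨C, hC, γ, hγ, hstab⟩ := h𝓜s
  have h𝓜's : UniformlyExpStable 𝓜' := by
    refine ⟨max C 1, lt_of_lt_of_le hC (le_max_left _ _), min γ 1,
      lt_min hγ one_pos, ?_⟩
    intro A' Φ' hA' hΦ' t ht
    have hA'm : Measurable A' := hA'.1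
    have hblock : ∀ s, 0 ≤ s → A' s = embMat hn (projMat hn (A' s)) (-1) := by
      intro s hs
      obtain ⟨M, _, hE⟩ := hA'.2 s hs
      rw [← hE, projMat_embMat]
    have hR' : ∀ s, 0 ≤ s → ‖A' s‖ ≤ max R 1 := by
      intro s hs
      obtain ⟨M, hM, hE⟩ := hA'.2 s hs
      rw [← hE]
      exact le_trans (norm_embMat_le hn M (-1)) (max_le_max (hRm M hM) (by simp))
    set A : ℝ → Mat 2 := fun s => projMat hn (A' s) with hAdef
    have hAm : Measurable A := (projL hn).continuous.measurable.comp hA'm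
    have hAsw : IsSwitchingLaw 𝓜 A := by
      refine ⟨hAm, fun s hs => ?_⟩
      obtain ⟨M, hM, hE⟩ := hA'.2 s hs
      show projMat hn (A' s) ∈ 𝓜
      rw [← hE, projMat_embMat]
      exact hM
    set Ψ : ℝ → Mat 2 := fun u => projMat hn (Φ' u) with hΨdef
    have hΨ : IsFundamentalMatrix A Ψ := fund_proj hn hblock hA'm hR' hΦ'
    have hRA : ∀ s, 0 ≤ s → ‖A s‖ ≤ R := fun s hs => hRm _ (hAsw.2 s hs)
    have hEfund : IsFundamentalMatrix A'
        (fun u => embMat hn (Ψ u) (Real.exp (-u))) :=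
      fund_congr (fun s hs => (hblock s hs).symm) (fund_emb hn hAm hRA hΨ)
    have huniq := fund_unique hA'm hR' hΦ'.1 hΦ'.2 hEfund.1 hEfund.2 t ht
    rw [huniq]
    have hΨb : ‖Ψ t‖ ≤ C * Real.exp (-γ * t) := hstab A Ψ hAsw hΨ t ht
    refine le_trans (norm_embMat_le hn (Ψ t) (Real.exp (-t))) (max_le ?_ ?_)
    · refine le_trans hΨb ?_
      have h1 : Real.exp (-γ * t) ≤ Real.exp (-(min γ 1) * t) := by
        apply Real.exp_le_exp.2
        have := min_le_left γ 1
        nlinarith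
      have h2 : C ≤ max C 1 := le_max_left _ _
      have := Real.exp_pos (-γ * t)
      nlinarith [Real.exp_pos (-(min γ 1) * t)]
    · rw [abs_of_pos (Real.exp_pos _)]
      have h1 : Real.exp (-t) ≤ Real.exp (-(min γ 1) * t) := by
        apply Real.exp_le_exp.2
        have := min_le_right γ 1
        nlinarith
      have h2 : (1:ℝ) ≤ max C 1 := le_max_right _ _
      nlinarith [Real.exp_pos (-(min γ 1) * t)]
  obtain ⟨V, hVmem, hVclf⟩ := huniv 𝓜' h𝓜'b h𝓜's
  obtain ⟨hVcont, W, hW, hWpiece⟩ := hVmem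
  obtain ⟨⟨hVc, hV0le, hV00, hVpos, hVmono⟩, hVstrict⟩ := hVclf
  have hlift : ∀ {A Φ : ℝ → Mat 2}, IsSwitchingLaw 𝓜 A → IsFundamentalMatrix A Φ →
      IsSwitchingLaw 𝓜' (fun s => embMat hn (A s) (-1)) ∧
      IsFundamentalMatrix (fun s => embMat hn (A s) (-1))
        (fun u => embMat hn (Φ u) (Real.exp (-u))) := by
    intro A Φ hA hΦ
    have hRA : ∀ s, 0 ≤ s → ‖A s‖ ≤ R := fun s hs => hRm _ (hA.2 s hs)
    refine ⟨⟨?_, fun s hs => ⟨A s, hA.2 s hs, rfl⟩⟩, fund_emb hn hA.1 hRA hΦ⟩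
    exact (embL hn).continuous.measurable.comp (hA.1.prodMk measurable_const)
  have hact : ∀ (Φ : ℝ → Mat 2) (x₀ : Vec 2) (u : ℝ),
      ((fun u => embMat hn (Φ u) (Real.exp (-u))) u).act (embV hn x₀)
        = embV hn ((Φ u).act x₀) := by
    intro Φ x₀ u
    exact act_embMat hn (Φ u) (Real.exp (-u)) x₀
  refine ⟨fun x => V (embV hn x), ⟨hVcont.comp (embV hn).continuous, ?_⟩, ?_, ?_⟩
  · refine ⟨fun i x => W i (embV hn x), fun i => ?_, fun x => hWpiece (embV hn x)⟩
    obtain ⟨p, hpd, hpe⟩ := hW i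
    refine ⟨MvPolynomial.bind₁ (killVars hn) p,
      le_trans (totalDegree_bind₁_killVars hn p) hpd, fun x => ?_⟩
    show W i (embV hn x) = _
    rw [hpe (embV hn x)]
    exact (eval_bind₁_killVars hn p x).symm
  · refine ⟨hVcont.comp (embV hn).continuous, fun x => hV0le _, ?_,
      fun x hx => hVpos _ (embV_ne_zero hn hx), ?_⟩
    · show V (embV hn (0 : Vec 2)) = 0
      rw [show embV hn (0 : Vec 2) = 0 from map_zero (embV hn)]
      exact hV00
    · intro A Φ hA hΦ x₀
      obtain ⟨hA'sw, hΦ'fund⟩ := hlift hA hΦ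
      have hmono := hVmono _ _ hA'sw hΦ'fund (embV hn x₀)
      have h2 : (fun u => V (((fun u => embMat hn (Φ u) (Real.exp (-u))) u).act (embV hn x₀)))
          = fun u => V (embV hn ((Φ u).act x₀)) := funext fun u => by rw [hact Φ x₀ u]
      rw [h2] at hmono
      exact hmono
  · intro A Φ hA hΦ x₀ hx₀
    obtain ⟨hA'sw, hΦ'fund⟩ := hlift hA hΦ
    have hstrict := hVstrict _ _ hA'sw hΦ'fund (embV hn x₀) (embV_ne_zero hn hx₀)
    have h2 : (fun u => V (((fun u => embMat hn (Φ u) (Real.exp (-u))) u).act (embV hn x₀)))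
        = fun u => V (embV hn ((Φ u).act x₀)) := funext fun u => by rw [hact Φ x₀ u]
    rw [h2] at hstrict
    exact hstrict

end
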